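/- For every fixed a ∈ A, the map [0,∞) → A defined by ħ ↦ S_ħ(a) for ħ > 0 and 0 ↦ a (i.e. S_0 = id) is continuous with respect to the norm of A. -/

import Mathlib

open MeasureTheory Matrix Topology Filter

noncomputable section

variable {d : ℕ} {A : Type*} [NormedRing A] [StarRing A] [CStarRing A]
  [NormedAlgebra ℂ A] [StarModule ℂ A] [CompleteSpace A]

/-- The operator `S_hb(a) = ∫ (√(det G)/(π·hb)^{d/2}) e^{−g(u,u)/hb} α_u(a) du`. -/
def Sop (α : (Fin d → ℝ) → A →ₗ[ℂ] A) (G : Matrix (Fin d) (Fin d) ℝ) (hb : ℝ) (a : A) : A :=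
  ∫ u : Fin d → ℝ,
    (Real.sqrt G.det / (Real.pi * hb) ^ ((d : ℝ) / 2) * Real.exp (-(u ⬝ᵥ (G *ᵥ u)) / hb)) • α u a

namespace Statement4Aux

/-- A measurable equivalence given by an invertible matrix, together with the
image of Lebesgue measure under it. -/
lemma exists_measEquiv_mulVec (C : Matrix (Fin d) (Fin d) ℝ) (hC : C.det ≠ 0) :
    ∃ e : (Fin d → ℝ) ≃ᵐ (Fin d → ℝ), (∀ v, e v = C *ᵥ v) ∧
      Measure.map e volume = ENNReal.ofReal |C.det⁻¹| • volume := by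
  have hdet : LinearMap.det (Matrix.toLin' C) ≠ 0 := by
    rwa [LinearMap.det_toLin']
  let e := ((Matrix.toLin' C).equivOfDetNeZero hdet).toContinuousLinearEquiv.toHomeomorph.toMeasurableEquiv
  have hcoe : (⇑e) = ⇑(Matrix.toLin' C) := rfl
  refine ⟨e, fun v => by rw [hcoe, Matrix.toLin'_apply], ?_⟩
  rw [hcoe, Real.map_matrix_volume_pi_eq_smul_volume_pi hC]

lemma integral_comp_mulVec {E : Type*} [NormedAddCommGroup E] [NormedSpace ℝ E]
    (C : Matrix (Fin d) (Fin d) ℝ) (hC : C.det ≠ 0) (f : (Fin d → ℝ) → E) :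
    ∫ v, f (C *ᵥ v) = |C.det|⁻¹ • ∫ w, f w := by
  obtain ⟨e, he, hmap⟩ := exists_measEquiv_mulVec C hC
  have h1 : ∫ w, f w ∂(Measure.map e volume) = ∫ v, f (e v) := integral_map_equiv e f
  simp_rw [he] at h1
  rw [← h1, hmap, integral_smul_measure, ENNReal.toReal_ofReal (abs_nonneg _), abs_inv]

lemma integrable_comp_mulVec (C : Matrix (Fin d) (Fin d) ℝ) (hC : C.det ≠ 0)
    (f : (Fin d → ℝ) → ℝ) (hf : Integrable f) :
    Integrable fun v => f (C *ᵥ v) := by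
  obtain ⟨e, he, hmap⟩ := exists_measEquiv_mulVec C hC
  have h1 : Integrable (f ∘ e) volume := by
    rw [← MeasurableEmbedding.integrable_map_iff e.measurableEmbedding, hmap]
    exact hf.smul_measure ENNReal.ofReal_ne_top
  have : (f ∘ e) = fun v => f (C *ᵥ v) := by
    funext v; simp [Function.comp, he]
  rwa [this] at h1

lemma exp_dotProduct_eq (w : Fin d → ℝ) :
    Real.exp (-(w ⬝ᵥ w)) = ∏ i, Real.exp (-1 * w i ^ 2) := by
  rw [← Real.exp_sum]
  congr 1
  simp only [dotProduct, neg_one_mul, ← Finset.sum_neg_distrib, sq]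

lemma gauss_std_integrable : Integrable (fun w : Fin d → ℝ => Real.exp (-(w ⬝ᵥ w))) := by
  simp_rw [exp_dotProduct_eq]
  exact Integrable.fintype_prod (f := fun (_ : Fin d) (x : ℝ) => Real.exp (-1 * x ^ 2))
    fun _ => integrable_exp_neg_mul_sq one_pos

lemma gauss_std_integral :
    ∫ w : Fin d → ℝ, Real.exp (-(w ⬝ᵥ w)) = Real.pi ^ ((d : ℝ) / 2) := by
  simp_rw [exp_dotProduct_eq]
  rw [MeasureTheory.volume_pi, MeasureTheory.integral_fintype_prod_eq_pow (ι := Fin d) (fun x : ℝ => Real.exp (-1 * x ^ 2))]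
  have : ∫ x : ℝ, Real.exp (-1 * x ^ 2) = Real.sqrt Real.pi := by
    simpa using integral_gaussian (1 : ℝ)
  rw [this, Fintype.card_fin, Real.sqrt_eq_rpow,
    ← Real.rpow_natCast (Real.pi ^ ((1 : ℝ) / 2)) d, ← Real.rpow_mul Real.pi_pos.le]
  congr 1
  ring

open scoped MatrixOrder in
lemma exists_sqrt (G : Matrix (Fin d) (Fin d) ℝ) (hG : G.PosDef) :
    ∃ C : Matrix (Fin d) (Fin d) ℝ, C.det ≠ 0 ∧ |C.det| = Real.sqrt G.det ∧
      ∀ v, v ⬝ᵥ G *ᵥ v = (C *ᵥ v) ⬝ᵥ (C *ᵥ v) := by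
  have hsd := hG.posSemidef
  have hmul : (CFC.sqrt G) * (CFC.sqrt G) = G := CFC.sqrt_mul_sqrt_self G hsd.nonneg
  have habs : |(CFC.sqrt G).det| = Real.sqrt G.det := by
    rw [← Real.sqrt_sq_eq_abs, sq, ← Matrix.det_mul, hmul]
  have hT : (CFC.sqrt G).transpose = (CFC.sqrt G) := by
    have h := (CFC.sqrt_nonneg G).posSemidef.isHermitian
    rwa [Matrix.IsHermitian, Matrix.conjTranspose_eq_transpose_of_trivial] at h
  have hdet0 : (CFC.sqrt G).det ≠ 0 := by
    intro h
    rw [h, abs_zero] at habs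
    exact absurd habs.symm (Real.sqrt_pos.mpr hG.det_pos).ne'
  refine ⟨(CFC.sqrt G), hdet0, habs, fun v => ?_⟩
  conv_lhs => rw [← hmul]
  rw [← Matrix.mulVec_mulVec, Matrix.dotProduct_mulVec]
  congr 1
  conv_lhs => rw [← hT]
  exact Matrix.vecMul_transpose _ _

lemma gaussG_integrable (G : Matrix (Fin d) (Fin d) ℝ) (hG : G.PosDef) :
    Integrable (fun v : Fin d → ℝ => Real.exp (-(v ⬝ᵥ G *ᵥ v))) := by
  obtain ⟨C, hC0, _, hQ⟩ := exists_sqrt G hG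
  simp_rw [hQ]
  exact integrable_comp_mulVec C hC0 (fun w => Real.exp (-(w ⬝ᵥ w))) gauss_std_integrable

lemma gaussG_integral (G : Matrix (Fin d) (Fin d) ℝ) (hG : G.PosDef) :
    ∫ v : Fin d → ℝ, Real.exp (-(v ⬝ᵥ G *ᵥ v))
      = Real.pi ^ ((d : ℝ) / 2) / Real.sqrt G.det := by
  obtain ⟨C, hC0, habs, hQ⟩ := exists_sqrt G hG
  simp_rw [hQ]
  rw [integral_comp_mulVec C hC0 (fun w => Real.exp (-(w ⬝ᵥ w))), gauss_std_integral, habs,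
    smul_eq_mul, inv_mul_eq_div]

end Statement4Aux

open Statement4Aux in
/-- The map `[0,∞) → A`, `hb ↦ S_hb(a)` for `hb > 0` and `0 ↦ a`, is norm continuous. -/
theorem statement4
    (α : (Fin d → ℝ) → A →ₗ[ℂ] A)
    (hiso : ∀ u (a : A), ‖α u a‖ = ‖a‖)
    (h0 : ∀ a : A, α 0 a = a)
    (hadd : ∀ u v (a : A), α (u + v) a = α u (α v a))
    (hcont : ∀ a : A, Continuous fun u => α u a)
    (G : Matrix (Fin d) (Fin d) ℝ) (hG : G.PosDef)
    (a : A) :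
    ContinuousOn (fun hb : ℝ => if 0 < hb then Sop α G hb a else a) (Set.Ici (0 : ℝ)) := by
  classical
  set c : ℝ := Real.sqrt G.det / Real.pi ^ ((d : ℝ) / 2) with hc_def
  have hpid : (0 : ℝ) < Real.pi ^ ((d : ℝ) / 2) := Real.rpow_pos_of_pos Real.pi_pos _
  have hc_nonneg : 0 ≤ c := div_nonneg (Real.sqrt_nonneg _) hpid.le
  set F : ℝ → (Fin d → ℝ) → A :=
    fun t v => (c * Real.exp (-(v ⬝ᵥ G *ᵥ v))) • α (Real.sqrt t • v) a with hF_def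
  set g : ℝ → A := fun t => ∫ v, F t v with hg_def
  have hQcont : Continuous fun v : Fin d → ℝ => v ⬝ᵥ G *ᵥ v :=
    continuous_id.dotProduct (continuous_const.matrix_mulVec continuous_id)
  -- continuity of g
  have hg_cont : Continuous g := by
    rw [continuous_iff_continuousAt]
    intro t0
    apply continuousAt_of_dominated
      (bound := fun v => (c * Real.exp (-(v ⬝ᵥ G *ᵥ v))) * ‖a‖)
    · filter_upwards with t
      apply Continuous.aestronglyMeasurable
      exact (continuous_const.mul (Real.continuous_exp.comp hQcont.neg)).smul
        ((hcont a).comp (continuous_const_smul _))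
    · filter_upwards with t
      filter_upwards with v
      rw [hF_def]
      simp only
      rw [norm_smul, hiso, Real.norm_eq_abs,
        abs_of_nonneg (mul_nonneg hc_nonneg (Real.exp_nonneg _))]
    · exact ((gaussG_integrable G hG).const_mul c).mul_const ‖a‖
    · filter_upwards with v
      apply Continuous.continuousAt
      exact continuous_const.smul ((hcont a).comp (Real.continuous_sqrt.smul continuous_const))
  -- value at 0
  have hg_zero : g 0 = a := by
    rw [hg_def]
    simp only [hF_def, Real.sqrt_zero, zero_smul, h0]
    rw [integral_smul_const, MeasureTheory.integral_const_mul, gaussG_integral G hG]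
    have hs : Real.sqrt G.det ≠ 0 := (Real.sqrt_pos.mpr hG.det_pos).ne'
    have : c * (Real.pi ^ ((d : ℝ) / 2) / Real.sqrt G.det) = 1 := by
      rw [hc_def]
      field_simp
    rw [this, one_smul]
  -- value on positives
  have hg_pos : ∀ t : ℝ, 0 < t → Sop α G t a = g t := by
    intro t ht
    have hR : (0 : ℝ) < Real.sqrt t := Real.sqrt_pos.mpr ht
    set R : ℝ := Real.sqrt t with hR_def
    have hRd : (0 : ℝ) < R ^ d := pow_pos hR d
    have hfin : Module.finrank ℝ (Fin d → ℝ) = d := by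
      rw [Module.finrank_pi]
      exact Fintype.card_fin d
    have key := MeasureTheory.Measure.integral_comp_smul_of_nonneg (μ := volume)
      (fun u : Fin d → ℝ =>
        (Real.sqrt G.det / (Real.pi * t) ^ ((d : ℝ) / 2) * Real.exp (-(u ⬝ᵥ (G *ᵥ u)) / t)) • α u a)
      R (hR := hR.le)
    rw [hfin] at key
    have hRt : R * R = t := Real.mul_self_sqrt ht.le
    have hRdpow : R ^ d = t ^ ((d : ℝ) / 2) := by
      rw [hR_def, Real.sqrt_eq_rpow, ← Real.rpow_natCast (t ^ ((1 : ℝ) / 2)) d,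
        ← Real.rpow_mul ht.le]
      congr 1
      ring
    have hcoef : R ^ d * (Real.sqrt G.det / (Real.pi * t) ^ ((d : ℝ) / 2)) = c := by
      rw [hRdpow, Real.mul_rpow Real.pi_pos.le ht.le, hc_def]
      have h1 : t ^ ((d : ℝ) / 2) ≠ 0 := (Real.rpow_pos_of_pos ht _).ne'
      field_simp
    rw [Sop]
    calc
      (∫ u : Fin d → ℝ,
          (Real.sqrt G.det / (Real.pi * t) ^ ((d : ℝ) / 2) * Real.exp (-(u ⬝ᵥ (G *ᵥ u)) / t)) • α u a)
          = R ^ d • ∫ v : Fin d → ℝ,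
            (Real.sqrt G.det / (Real.pi * t) ^ ((d : ℝ) / 2)
              * Real.exp (-((R • v) ⬝ᵥ (G *ᵥ (R • v))) / t)) • α (R • v) a := by
            rw [key, smul_smul, mul_inv_cancel₀ hRd.ne', one_smul]
      _ = ∫ v : Fin d → ℝ, R ^ d •
            ((Real.sqrt G.det / (Real.pi * t) ^ ((d : ℝ) / 2)
              * Real.exp (-((R • v) ⬝ᵥ (G *ᵥ (R • v))) / t)) • α (R • v) a) :=
            (integral_smul _ _).symm
      _ = g t := by
        rw [hg_def]
        congr 1
        funext v
        have hquad : (R • v) ⬝ᵥ (G *ᵥ (R • v)) = t * (v ⬝ᵥ G *ᵥ v) := by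
          rw [Matrix.mulVec_smul, smul_dotProduct, dotProduct_smul,
            smul_eq_mul, smul_eq_mul, ← mul_assoc, hRt]
        rw [hquad, hF_def]
        simp only
        rw [smul_smul, ← mul_assoc, hcoef]
        congr 2
        rw [neg_div, mul_div_cancel_left₀ _ ht.ne']
  -- conclusion
  apply ContinuousOn.congr (hg_cont.continuousOn)
  intro t ht
  show (if 0 < t then Sop α G t a else a) = g t
  by_cases h : 0 < t
  · rw [if_pos h, hg_pos t h]
  · have ht0 : t = 0 := le_antisymm (not_lt.mp h) ht
    rw [if_neg h, ht0, hg_zero]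

end
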